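/- For positive definite matrices A, B and t ∈ [0,1], the weighted spectral geometric mean X = A ♮_t B is the unique positive definite solution of the equation (A^{-1} # B)^t = A^{-1} # X. -/

import Mathlib

open scoped Matrix.Norms.L2Operator ComplexOrder

variable {n : Type*} [Fintype n] [DecidableEq n]

/-- Real power of a (Hermitian) matrix via the continuous functional calculus. -/
noncomputable def mpow (A : Matrix n n ℂ) (t : ℝ) : Matrix n n ℂ :=
  cfc (fun x : ℝ => x ^ t) A

/-- Matrix logarithm via the continuous functional calculus. -/
noncomputable def mlog (A : Matrix n n ℂ) : Matrix n n ℂ :=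
  cfc Real.log A

/-- The geometric mean `A # B = A^{1/2} (A^{-1/2} B A^{-1/2})^{1/2} A^{1/2}`. -/
noncomputable def geo (A B : Matrix n n ℂ) : Matrix n n ℂ :=
  mpow A (1/2) * mpow (mpow A (-(1/2)) * B * mpow A (-(1/2))) (1/2) * mpow A (1/2)

/-- The weighted geometric mean `A #ₜ B = A^{1/2} (A^{-1/2} B A^{-1/2})^t A^{1/2}`. -/
noncomputable def wgeo (t : ℝ) (A B : Matrix n n ℂ) : Matrix n n ℂ :=
  mpow A (1/2) * mpow (mpow A (-(1/2)) * B * mpow A (-(1/2))) t * mpow A (1/2)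

/-- The weighted spectral geometric mean `A ♮ₜ B = (A⁻¹ # B)^t A (A⁻¹ # B)^t`. -/
noncomputable def sgeo (t : ℝ) (A B : Matrix n n ℂ) : Matrix n n ℂ :=
  mpow (geo A⁻¹ B) t * A * mpow (geo A⁻¹ B) t

/-- Semi-metric `d(A,B) = 2 ‖log (A⁻¹ # B)‖` (operator norm). -/
noncomputable def dsm (A B : Matrix n n ℂ) : ℝ :=
  2 * ‖mlog (geo A⁻¹ B)‖

/-- Loewner order: `Loewner A B` means `A ≤ B`, i.e. `B - A` is positive semidefinite. -/
def Loewner (A B : Matrix n n ℂ) : Prop := (B - A).PosSemidef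


section MyAux

open Matrix

variable {n : Type*} [Fintype n] [DecidableEq n]

section Aux

lemma spec_pos {A : Matrix n n ℂ} (hA : A.PosDef) : ∀ x ∈ spectrum ℝ A, 0 < x := by
  rw [hA.1.spectrum_real_eq_range_eigenvalues]
  rintro x ⟨i, rfl⟩
  exact hA.eigenvalues_pos i

lemma posDef_conj {A : Matrix n n ℂ} (hA : A.PosDef) {B : Matrix n n ℂ} (hB : IsUnit B) :
    (B * A * Bᴴ).PosDef := by
  exact hA.mul_mul_conjTranspose_same (Matrix.vecMul_injective_iff_isUnit.mpr hB)

end Aux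

section Aux2

variable {A : Matrix n n ℂ}

lemma contOn (f : ℝ → ℝ) (s : Set ℝ) (hs : s ⊆ spectrum ℝ A) : ContinuousOn f s :=
  ((Matrix.finite_real_spectrum (A := A)).subset hs).continuousOn f

lemma cfc_posDef (hA : A.PosDef) {f : ℝ → ℝ} (hf : ∀ x ∈ spectrum ℝ A, 0 < f x) :
    (cfc f A).PosDef := by
  rw [hA.1.cfc_eq, Matrix.IsHermitian.cfc]
  rw [Unitary.conjStarAlgAut_apply, Matrix.star_eq_conjTranspose]
  refine posDef_conj (Matrix.PosDef.diagonal fun i => ?_) ?_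
  · refine Complex.zero_lt_real.mpr (hf _ ?_)
    rw [hA.1.spectrum_real_eq_range_eigenvalues]
    exact ⟨i, rfl⟩
  · exact ⟨Unitary.toUnits (hA.1.eigenvectorUnitary), rfl⟩

lemma cfc_herm (f : ℝ → ℝ) (hA : A.IsHermitian) : (cfc f A).IsHermitian := by
  rw [hA.cfc_eq, Matrix.IsHermitian.cfc]
  rw [Unitary.conjStarAlgAut_apply, Matrix.star_eq_conjTranspose]
  exact Matrix.isHermitian_mul_mul_conjTranspose _ (Matrix.isHermitian_diagonal_of_self_adjoint _
    (funext fun i => Complex.conj_ofReal _))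

lemma mpow_posDef (hA : A.PosDef) (t : ℝ) : (mpow A t).PosDef :=
  cfc_posDef hA fun x hx => Real.rpow_pos_of_pos (spec_pos hA x hx) t

lemma mpow_herm (hA : A.PosDef) (t : ℝ) : (mpow A t).IsHermitian :=
  (mpow_posDef hA t).1

lemma mpow_add (hA : A.PosDef) (s u : ℝ) : mpow A s * mpow A u = mpow A (s + u) := by
  rw [mpow, mpow, mpow, ← cfc_mul _ _ A ((Matrix.finite_real_spectrum (A := A)).continuousOn _)
    ((Matrix.finite_real_spectrum (A := A)).continuousOn _)]
  exact cfc_congr fun x hx => (Real.rpow_add (spec_pos hA x hx) s u).symm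

lemma mpow_one (hA : A.PosDef) : mpow A 1 = A := by
  have : IsSelfAdjoint A := hA.1
  rw [mpow]
  simp only [Real.rpow_one]
  exact cfc_id' ℝ A

lemma mpow_zero (hA : A.PosDef) : mpow A 0 = 1 := by
  have : IsSelfAdjoint A := hA.1
  rw [mpow]
  simp only [Real.rpow_zero]
  exact cfc_const_one ℝ A

lemma mpow_neg_mul (hA : A.PosDef) (s : ℝ) : mpow A (-s) * mpow A s = 1 := by
  rw [mpow_add hA, neg_add_cancel, mpow_zero hA]

lemma mpow_mul_neg (hA : A.PosDef) (s : ℝ) : mpow A s * mpow A (-s) = 1 := by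
  rw [mpow_add hA, add_neg_cancel, mpow_zero hA]

lemma mpow_mpow (hA : A.PosDef) (s u : ℝ) : mpow (mpow A s) u = mpow A (s * u) := by
  have hsa : IsSelfAdjoint A := hA.1
  rw [mpow, mpow, mpow, ← cfc_comp _ _ A hsa
    (((Matrix.finite_real_spectrum (A := A)).image _).continuousOn _)
    ((Matrix.finite_real_spectrum (A := A)).continuousOn _)]
  exact cfc_congr fun x hx => by
    simp only [Function.comp_apply]
    rw [← Real.rpow_mul (spec_pos hA x hx).le]

lemma mpow_inv (hA : A.PosDef) (s : ℝ) : mpow A⁻¹ s = mpow A (-s) := by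
  have h1 : A⁻¹ = mpow A (-1) := by
    refine (Matrix.inv_eq_left_inv ?_)
    have := mpow_neg_mul hA 1
    rwa [mpow_one hA] at this
  rw [h1, mpow_mpow hA, neg_one_mul]

end Aux2


variable {A B : Matrix n n ℂ}

lemma mpow_sq_half {M : Matrix n n ℂ} (hM : M.PosDef) : mpow (M * M) (1/2) = M := by
  have h1 : M * M = mpow M (1 + 1) := by rw [← mpow_add hM, mpow_one hM]
  rw [h1, mpow_mpow hM]
  norm_num
  exact mpow_one hM

lemma geo_posDef (hA : A.PosDef) (hB : B.PosDef) : (geo A B).PosDef := by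
  have hC := mpow_posDef hA (1/2)
  have hCm := mpow_posDef hA (-(1/2))
  have h1 : (mpow A (-(1/2)) * B * mpow A (-(1/2))).PosDef := by
    have := posDef_conj hB hCm.isUnit
    rwa [hCm.1] at this
  have h2 := mpow_posDef h1 (1/2)
  have := posDef_conj h2 hC.isUnit
  rwa [hC.1] at this

lemma geo_inv_eq (hA : A.PosDef) (X : Matrix n n ℂ) :
    geo A⁻¹ X =
      mpow A (-(1/2)) * mpow (mpow A (1/2) * X * mpow A (1/2)) (1/2) * mpow A (-(1/2)) := by
  rw [geo, mpow_inv hA, mpow_inv hA, neg_neg]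

lemma cancel_out (hA : A.PosDef) (M : Matrix n n ℂ) :
    mpow A (-(1/2)) * (mpow A (1/2) * M * mpow A (1/2)) * mpow A (-(1/2)) = M := by
  have h : mpow A (-(1/2)) * (mpow A (1/2) * M * mpow A (1/2)) * mpow A (-(1/2)) =
      (mpow A (-(1/2)) * mpow A (1/2)) * M * (mpow A (1/2) * mpow A (-(1/2))) := by
    simp only [Matrix.mul_assoc]
  rw [h, mpow_neg_mul hA, mpow_mul_neg hA, one_mul, mul_one]

lemma assoc_sq (S T A : Matrix n n ℂ) (h : S * S = A) :
    S * (T * A * T) * S = (S * T * S) * (S * T * S) := by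
  subst h
  simp only [Matrix.mul_assoc]

lemma cancel_in (hA : A.PosDef) (M : Matrix n n ℂ) :
    mpow A (1/2) * (mpow A (-(1/2)) * M * mpow A (-(1/2))) * mpow A (1/2) =
      (mpow A (1/2) * mpow A (-(1/2))) * M * (mpow A (-(1/2)) * mpow A (1/2)) := by
  simp only [Matrix.mul_assoc]

end MyAux

/-- `A ♮ₜ B` is the unique positive definite solution `X` of
`(A⁻¹ # B)^t = A⁻¹ # X`. -/
theorem stmt7 (A B : Matrix n n ℂ) (hA : A.PosDef) (hB : B.PosDef)
    {t : ℝ} (ht : t ∈ Set.Icc (0:ℝ) 1) :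
    (sgeo t A B).PosDef ∧ mpow (geo A⁻¹ B) t = geo A⁻¹ (sgeo t A B) ∧
      ∀ X : Matrix n n ℂ, X.PosDef → mpow (geo A⁻¹ B) t = geo A⁻¹ X →
        X = sgeo t A B := by
  have hS : (mpow A (1/2)).PosDef := mpow_posDef hA _
  have hSS : mpow A (1/2) * mpow A (1/2) = A := by
    rw [mpow_add hA]
    norm_num
    exact mpow_one hA
  have hG : (geo A⁻¹ B).PosDef := geo_posDef hA.inv hB
  have hT : (mpow (geo A⁻¹ B) t).PosDef := mpow_posDef hG t
  have hsgeo : sgeo t A B = mpow (geo A⁻¹ B) t * A * mpow (geo A⁻¹ B) t := rfl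
  have hTAT : (mpow (geo A⁻¹ B) t * A * mpow (geo A⁻¹ B) t).PosDef := by
    have := posDef_conj hA hT.isUnit
    rwa [hT.1] at this
  have hSTS : (mpow A (1/2) * mpow (geo A⁻¹ B) t * mpow A (1/2)).PosDef := by
    have := posDef_conj hT hS.isUnit
    rwa [hS.1] at this
  have hmain : mpow A (1/2) * (mpow (geo A⁻¹ B) t * A * mpow (geo A⁻¹ B) t) * mpow A (1/2) =
      (mpow A (1/2) * mpow (geo A⁻¹ B) t * mpow A (1/2)) *
        (mpow A (1/2) * mpow (geo A⁻¹ B) t * mpow A (1/2)) := by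
    exact assoc_sq _ _ _ hSS
  have h2 : mpow (geo A⁻¹ B) t = geo A⁻¹ (sgeo t A B) := by
    rw [hsgeo, geo_inv_eq hA (mpow (geo A⁻¹ B) t * A * mpow (geo A⁻¹ B) t), hmain, mpow_sq_half hSTS]
    have h : mpow A (-(1/2)) *
        (mpow A (1/2) * mpow (geo A⁻¹ B) t * mpow A (1/2)) * mpow A (-(1/2)) =
        mpow (geo A⁻¹ B) t := by
      have h' : mpow A (-(1/2)) *
          (mpow A (1/2) * mpow (geo A⁻¹ B) t * mpow A (1/2)) * mpow A (-(1/2)) =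
          (mpow A (-(1/2)) * mpow A (1/2)) * mpow (geo A⁻¹ B) t *
            (mpow A (1/2) * mpow A (-(1/2))) := by
        simp only [Matrix.mul_assoc]
      rw [h', mpow_neg_mul hA, mpow_mul_neg hA, one_mul, mul_one]
    rw [h]
  refine ⟨by rw [hsgeo]; exact hTAT, h2, ?_⟩
  intro X hX hXeq
  rw [geo_inv_eq hA X] at hXeq
  have hSXS : (mpow A (1/2) * X * mpow A (1/2)).PosDef := by
    have := posDef_conj hX hS.isUnit
    rwa [hS.1] at this
  have hR : mpow A (1/2) * mpow (geo A⁻¹ B) t * mpow A (1/2) =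
      mpow (mpow A (1/2) * X * mpow A (1/2)) (1/2) := by
    have h := congrArg
      (fun M => mpow A (1/2) * M * mpow A (1/2)) hXeq
    rw [h]
    have h' : mpow A (1/2) * (mpow A (-(1/2)) *
        mpow (mpow A (1/2) * X * mpow A (1/2)) (1/2) * mpow A (-(1/2))) * mpow A (1/2) =
        (mpow A (1/2) * mpow A (-(1/2))) * mpow (mpow A (1/2) * X * mpow A (1/2)) (1/2) *
          (mpow A (-(1/2)) * mpow A (1/2)) := by
      simp only [Matrix.mul_assoc]
    rw [h', mpow_mul_neg hA, mpow_neg_mul hA, one_mul, mul_one]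
  have hN : mpow A (1/2) * X * mpow A (1/2) =
      mpow A (1/2) * (mpow (geo A⁻¹ B) t * A * mpow (geo A⁻¹ B) t) * mpow A (1/2) := by
    have hhalf : mpow A (1/2) * X * mpow A (1/2) =
        mpow (mpow A (1/2) * X * mpow A (1/2)) (1/2) *
          mpow (mpow A (1/2) * X * mpow A (1/2)) (1/2) := by
      rw [mpow_add hSXS]
      norm_num
      exact (mpow_one hSXS).symm
    rw [hhalf, ← hR, hmain]
  calc X = mpow A (-(1/2)) * (mpow A (1/2) * X * mpow A (1/2)) * mpow A (-(1/2)) :=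
        (cancel_out hA X).symm
    _ = mpow A (-(1/2)) * (mpow A (1/2) *
          (mpow (geo A⁻¹ B) t * A * mpow (geo A⁻¹ B) t) * mpow A (1/2)) * mpow A (-(1/2)) := by
        rw [hN]
    _ = mpow (geo A⁻¹ B) t * A * mpow (geo A⁻¹ B) t := cancel_out hA _
    _ = sgeo t A B := rfl
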